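/- Let W be a neighborhood of 0 in ℂ and let f be a non-constant function that is analytic at 0, maps W ∩ ℍ into ℍ, and satisfies f(0) ∈ ℝ. Write f(z) = Σₖ aₖ zᵏ for the Taylor series of f at 0, suppose some aₖ is non-real, and let n = min{k : aₖ ∉ ℝ}. Then a₁ > 0, n is even, Im aₙ > 0, and f has order of contact n with ℝ at 0. -/

import Mathlib

open Complex Filter Set Topology Asymptotics Metric Polynomial

noncomputable section

/-- The open upper half-plane, as a subset of `ℂ`. -/
def UHP : Set ℂ := {z : ℂ | 0 < z.im}

/-- `f` has order of contact `c` with `ℝ` at `0` (half-plane version). -/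
def HalfPlaneContact (f : ℂ → ℂ) (c : ℝ) : Prop :=
  (f 0).im = 0 ∧
  ∃ m M δ : ℝ, 0 < m ∧ m ≤ M ∧ 0 < δ ∧
    ∀ x : ℝ, 0 < |x| → |x| < δ →
      m ≤ (f (x : ℂ)).im / ‖f 0 - f (x : ℂ)‖ ^ c ∧
      (f (x : ℂ)).im / ‖f 0 - f (x : ℂ)‖ ^ c ≤ M

/-- `φ` has order of contact `c` with `∂𝔻` at `ζ` (disk version). -/
def DiskContact (φ : ℂ → ℂ) (ζ : ℂ) (c : ℝ) : Prop :=
  ‖φ ζ‖ = 1 ∧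
  ∃ m M δ : ℝ, 0 < m ∧ m ≤ M ∧ 0 < δ ∧
    ∀ η : ℂ, ‖η‖ = 1 → η ≠ ζ → ‖η - ζ‖ < δ →
      m ≤ (1 - ‖φ η‖ ^ 2) / ‖φ ζ - φ η‖ ^ c ∧
      (1 - ‖φ η‖ ^ 2) / ‖φ ζ - φ η‖ ^ c ≤ M

/-- The Pick class `𝒫`: analytic on `ℍ` with nonnegative imaginary part there. -/
def InPick (f : ℂ → ℂ) : Prop :=
  DifferentiableOn ℂ f UHP ∧ ∀ z ∈ UHP, 0 ≤ (f z).im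

/-- The class `𝒫₀`: members of `𝒫` that extend analytically to a neighborhood of `0`. -/
def InPick0 (f : ℂ → ℂ) : Prop := InPick f ∧ AnalyticAt ℂ f 0

/-- The `k`-th Taylor coefficient of `f` at `0`. -/
def taylorCoeff (f : ℂ → ℂ) (k : ℕ) : ℂ := iteratedDeriv k f 0 / (Nat.factorial k : ℂ)

/-- The Hankel matrix `H_m(a₁, …, a_{2m−1})` with `(i,j)` entry `a_{i+j+1}` (0-based). -/
def hankel (a : ℕ → ℂ) (m : ℕ) : Matrix (Fin m) (Fin m) ℂ :=
  Matrix.of fun i j => a (i.1 + j.1 + 1)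

/-- The linear fractional transformation associated with a 2×2 matrix. -/
def lftApply (M : Matrix (Fin 2) (Fin 2) ℂ) (h : ℂ) : ℂ :=
  (M 0 0 * h + M 0 1) / (M 1 0 * h + M 1 1)

/-- The augmentation matrix `A(a₀, a₁)(z)`. -/
def augMatrix (a₀ a₁ : ℝ) (z : ℂ) : Matrix (Fin 2) (Fin 2) ℂ :=
  !![(a₀ : ℂ) * (a₁ : ℂ) * z, -(a₀ : ℂ) - (a₁ : ℂ) * z; (a₁ : ℂ) * z, -1]

/-- The product `A(s₀,t₀)(z) A(s₁,t₁)(z) ⋯ A(s_{m−1},t_{m−1})(z)`. -/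
def augProdN (m : ℕ) (s t : ℕ → ℝ) (z : ℂ) : Matrix (Fin 2) (Fin 2) ℂ :=
  (List.ofFn fun i : Fin m => augMatrix (s i.1) (t i.1) z).prod

/-- The conformal map `τ_α : 𝔻 → ℍ`, `τ_α(z) = i(α − z)/(α + z)`. -/
def cayley (α z : ℂ) : ℂ := Complex.I * (α - z) / (α + z)

/-- The inverse `τ_α⁻¹ : ℍ → 𝔻`, `τ_α⁻¹(w) = α(i − w)/(i + w)`. -/
def cayleyInv (α w : ℂ) : ℂ := α * (Complex.I - w) / (Complex.I + w)

/-- The exterior map `φ_e = ρ ∘ φ ∘ ρ`, where `ρ(z) = 1/conj(z)`. -/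
def extMap (φ : ℂ → ℂ) (z : ℂ) : ℂ :=
  ((starRingEnd ℂ) (φ (((starRingEnd ℂ) z)⁻¹)))⁻¹

private lemma aux_ofReal_mul_im (r : ℝ) (z : ℂ) : ((r:ℂ) * z).im = r * z.im := by
  simp [Complex.mul_im]

private lemma aux_taylorCoeff {f : ℂ → ℂ} {p : FormalMultilinearSeries ℂ ℂ ℂ}
    (hp : HasFPowerSeriesAt f p 0) (k : ℕ) : taylorCoeff f k = p.coeff k := by
  obtain ⟨r, hpb⟩ := hp
  have h := hpb.factorial_smul (1 : ℂ) k
  unfold taylorCoeff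
  rw [iteratedDeriv_eq_iteratedFDeriv, ← h]
  have h2 : (p k fun _ => (1:ℂ)) = p.coeff k := rfl
  rw [h2, nsmul_eq_mul]
  have : ((Nat.factorial k : ℕ) : ℂ) ≠ 0 := Nat.cast_ne_zero.mpr k.factorial_ne_zero
  field_simp

private lemma aux_remainder {f : ℂ → ℂ} {p : FormalMultilinearSeries ℂ ℂ ℂ}
    (hp : HasFPowerSeriesAt f p 0) (j : ℕ) :
    ∃ C > (0:ℝ), ∃ δ > (0:ℝ), ∀ y : ℂ, ‖y‖ < δ →
      ‖f y - ∑ k ∈ Finset.range j, y ^ k * p.coeff k‖ ≤ C * ‖y‖ ^ j := by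
  have hps : ∀ y : ℂ, p.partialSum j y = ∑ k ∈ Finset.range j, y ^ k * p.coeff k := by
    intro y
    unfold FormalMultilinearSeries.partialSum
    exact Finset.sum_congr rfl fun k _ => by
      rw [FormalMultilinearSeries.apply_eq_pow_smul_coeff, smul_eq_mul]
  have h := hp.isBigO_sub_partialSum_pow j
  simp only [zero_add] at h
  rw [isBigO_iff] at h
  obtain ⟨c, hc⟩ := h
  rw [Metric.eventually_nhds_iff] at hc
  obtain ⟨δ, hδ, hb⟩ := hc
  refine ⟨max c 1, lt_max_of_lt_right one_pos, δ, hδ, fun y hy => ?_⟩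
  have := hb (show dist y 0 < δ by simpa [dist_zero_right] using hy)
  rw [hps] at this
  calc ‖f y - ∑ k ∈ Finset.range j, y ^ k * p.coeff k‖ ≤ c * ‖‖y‖ ^ j‖ := this
    _ ≤ max c 1 * ‖y‖ ^ j := by
        rw [norm_pow, norm_norm]
        exact mul_le_mul_of_nonneg_right (le_max_left _ _) (by positivity)

private lemma aux_nonneg {v C δ : ℝ} (hC : 0 < C) (hδ : 0 < δ)
    (h : ∀ r : ℝ, 0 < r → r < δ → -(C * r) ≤ v) : 0 ≤ v := by
  by_contra hv
  push_neg at hv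
  set r := min (δ/2) (-v/(2*C)) with hr
  have hr1 : 0 < r := lt_min (by linarith) (div_pos (by linarith) (by linarith))
  have hr2 : r < δ := (min_le_left _ _).trans_lt (by linarith)
  have h1 := h r hr1 hr2
  have h2 : r ≤ -v/(2*C) := min_le_right _ _
  have h3 : C * r ≤ -v/2 := by
    calc C * r ≤ C * (-v/(2*C)) := mul_le_mul_of_nonneg_left h2 hC.le
      _ = -v/2 := by field_simp
  linarith

set_option maxHeartbeats 2000000 in
/-- if `f` is analytic at `0`, maps `W ∩ ℍ` into `ℍ`, has `f(0) ∈ ℝ`, and `n` is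
the index of its first non-real Taylor coefficient, then `a₁ > 0`, `n` is even, `Im aₙ > 0`,
and `f` has order of contact `n` with `ℝ` at `0`. -/
theorem contact_from_first_nonreal_coeff
    (W : Set ℂ) (hW : W ∈ 𝓝 (0 : ℂ)) (f : ℂ → ℂ)
    (hfa : AnalyticAt ℂ f 0) (hmap : ∀ z ∈ W ∩ UHP, f z ∈ UHP)
    (hre : (f 0).im = 0)
    (hnc : ¬ ∀ z ∈ W ∩ UHP, f z = f 0)
    (n : ℕ) (hn : (taylorCoeff f n).im ≠ 0) (hmin : ∀ k < n, (taylorCoeff f k).im = 0) :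
    ((deriv f 0).im = 0 ∧ 0 < (deriv f 0).re) ∧
    Even n ∧ 0 < (taylorCoeff f n).im ∧ HalfPlaneContact f (n : ℝ) := by
  classical
  obtain ⟨p, hp⟩ := hfa
  have hcoeff : ∀ k, taylorCoeff f k = p.coeff k := aux_taylorCoeff hp
  have ha0 : p.coeff 0 = f 0 := hp.coeff_zero 1
  obtain ⟨ε, εpos, hball⟩ := Metric.mem_nhds_iff.mp hW
  have hn0 : 0 < n := by
    rcases Nat.eq_zero_or_pos n with h | h
    · exfalso; apply hn; rw [h, hcoeff 0, ha0]; exact hre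
    · exact h
  have hmem : ∀ z : ℂ, ‖z‖ < ε → 0 < z.im → z ∈ W ∩ UHP := fun z h1 h2 =>
    ⟨hball (by simpa [Metric.mem_ball, dist_zero_right] using h1), h2⟩
  -- Step B: boundary nonnegativity of Im f on the real axis
  have hfa' : AnalyticAt ℂ f 0 := ⟨p, hp⟩
  obtain ⟨ρ, ρpos, hρ⟩ := Metric.eventually_nhds_iff.mp hfa'.eventually_analyticAt
  have hB : ∀ x : ℝ, |x| < min ρ ε → 0 ≤ (f (x:ℂ)).im := by
    intro x hx
    have hxn : ‖(x:ℂ)‖ = |x| := by simp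
    have hca : ContinuousAt f (x:ℂ) :=
      (hρ (by rw [dist_zero_right, hxn]; exact hx.trans_le (min_le_left _ _))).continuousAt
    have hline : Tendsto (fun y : ℝ => (x:ℂ) + y * Complex.I) (𝓝[>] 0) (𝓝 (x:ℂ)) := by
      have h1 : Tendsto (fun y : ℝ => (x:ℂ) + y * Complex.I) (𝓝 0)
          (𝓝 ((x:ℂ) + (0:ℝ) * Complex.I)) :=
        tendsto_const_nhds.add ((Complex.continuous_ofReal.tendsto 0).mul tendsto_const_nhds)
      simpa using h1.mono_left nhdsWithin_le_nhds
    have him : Tendsto (fun y : ℝ => (f ((x:ℂ) + y * Complex.I)).im) (𝓝[>] 0)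
        (𝓝 (f (x:ℂ)).im) := (Complex.continuous_im.tendsto _).comp (hca.tendsto.comp hline)
    refine ge_of_tendsto him ?_
    have hev : Ioo (0:ℝ) (ε - |x|) ∈ 𝓝[>] (0:ℝ) := by
      apply Ioo_mem_nhdsGT_of_mem
      refine ⟨le_refl _, ?_⟩
      have := hx.trans_le (min_le_right _ _); linarith
    filter_upwards [hev] with y hy
    have hz : ((x:ℂ) + y * Complex.I) ∈ W ∩ UHP := by
      apply hmem
      · calc ‖(x:ℂ) + (y:ℂ) * Complex.I‖ ≤ ‖(x:ℂ)‖ + ‖(y:ℂ) * Complex.I‖ := norm_add_le _ _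
          _ = |x| + |y| := by simp
          _ < ε := by rw [abs_of_pos hy.1]; linarith [hy.2]
      · simp [Complex.add_im, Complex.mul_I_im, hy.1]
    exact (hmap _ hz).le
  -- Step C preparation: remainder at order n+1
  obtain ⟨C2, hC2, δ2, hδ2, hR2⟩ := aux_remainder hp (n+1)
  set v := (p.coeff n).im with hv
  have hvne : v ≠ 0 := by rw [hv, ← hcoeff]; exact hn
  have hsum_im : ∀ x : ℝ, (∑ k ∈ Finset.range (n+1), (x:ℂ)^k * p.coeff k).im = v * x^n := by
    intro x
    rw [Finset.sum_range_succ, Complex.add_im]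
    have h1 : (∑ k ∈ Finset.range n, (x:ℂ)^k * p.coeff k).im = 0 := by
      rw [Complex.im_sum]
      apply Finset.sum_eq_zero
      intro k hk
      have hk0 : (p.coeff k).im = 0 := by rw [← hcoeff]; exact hmin k (Finset.mem_range.mp hk)
      rw [← Complex.ofReal_pow, aux_ofReal_mul_im, hk0, mul_zero]
    rw [h1, ← Complex.ofReal_pow, aux_ofReal_mul_im, zero_add, mul_comm]
  have himx : ∀ x : ℝ, |x| < δ2 → |(f (x:ℂ)).im - v * x^n| ≤ C2 * |x|^(n+1) := by
    intro x hx
    have hb := hR2 (x:ℂ) (by simpa using hx)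
    have h1 : |((f (x:ℂ)) - ∑ k ∈ Finset.range (n+1), (x:ℂ)^k * p.coeff k).im|
        ≤ C2 * |x|^(n+1) := by
      refine le_trans (Complex.abs_im_le_norm _) ?_
      simpa using hb
    rwa [Complex.sub_im, hsum_im] at h1
  have hkey : ∀ x : ℝ, |x| < min (min ρ ε) δ2 → -(C2 * |x|^(n+1)) ≤ v * x^n := by
    intro x hx
    have h1 := himx x (hx.trans_le (min_le_right _ _))
    have h0 := hB x (hx.trans_le (min_le_left _ _))
    rcases abs_le.mp h1 with ⟨_, hR⟩
    linarith
  set δ' := min (min ρ ε) δ2 with hδ'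
  have hδ'pos : 0 < δ' := lt_min (lt_min ρpos εpos) hδ2
  -- Evenness of n
  have heven : Even n := by
    by_contra hodd
    rw [Nat.not_even_iff_odd] at hodd
    have habs : 0 ≤ -|v| := by
      apply aux_nonneg hC2 hδ'pos
      intro r hr hrδ
      have h1 := hkey r (by rwa [abs_of_pos hr])
      have h2 := hkey (-r) (by rwa [abs_neg, abs_of_pos hr])
      rw [abs_of_pos hr] at h1
      rw [abs_neg, abs_of_pos hr] at h2
      rw [hodd.neg_pow] at h2
      have h3 : |v * r^n| ≤ C2 * r^(n+1) := abs_le.mpr ⟨h1, by linarith⟩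
      rw [abs_mul, abs_of_pos (pow_pos hr n)] at h3
      have h4 : |v| * r^n ≤ (C2 * r) * r^n := by
        rw [pow_succ] at h3; calc |v| * r^n ≤ C2 * (r^n * r) := h3
          _ = (C2 * r) * r^n := by ring
      have h5 := le_of_mul_le_mul_right h4 (pow_pos hr n)
      linarith
    exact hvne (abs_eq_zero.mp (le_antisymm (by linarith) (abs_nonneg v)))
  have hvpos : 0 < v := by
    have h0 : 0 ≤ v := by
      apply aux_nonneg hC2 hδ'pos
      intro r hr hrδ
      have h1 := hkey r (by rwa [abs_of_pos hr])
      rw [abs_of_pos hr] at h1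
      have h2 : (-(C2*r)) * r^n ≤ v * r^n := by
        calc (-(C2*r))*r^n = -(C2 * r^(n+1)) := by ring
          _ ≤ v * r^n := h1
      exact le_of_mul_le_mul_right h2 (pow_pos hr n)
    exact h0.lt_of_ne (Ne.symm hvne)
  have hn2 : 2 ≤ n := by
    obtain ⟨k, hk⟩ := heven; omega
  have ha1im : (p.coeff 1).im = 0 := by rw [← hcoeff]; exact hmin 1 (by omega)
  -- Step A: the first nonzero coefficient with positive index
  have hexm : ∃ k, 0 < k ∧ p.coeff k ≠ 0 :=
    ⟨n, hn0, fun h => hvne (by rw [hv, h]; simp)⟩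
  set m := Nat.find hexm with hm
  obtain ⟨hmpos, hmne⟩ : 0 < m ∧ p.coeff m ≠ 0 := Nat.find_spec hexm
  have hmmin : ∀ k, 0 < k → k < m → p.coeff k = 0 := by
    intro k h1 h2
    by_contra h3
    exact Nat.find_min hexm h2 ⟨h1, h3⟩
  have hpsum : ∀ z : ℂ, ∑ k ∈ Finset.range (m+1), z^k * p.coeff k
      = f 0 + p.coeff m * z^m := by
    intro z
    rw [Finset.sum_range_succ]
    have h1 : ∑ k ∈ Finset.range m, z^k * p.coeff k = f 0 := by
      rw [Finset.sum_eq_single 0]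
      · rw [pow_zero, one_mul, ha0]
      · intro k hk hk0
        rw [hmmin k (Nat.pos_of_ne_zero hk0) (Finset.mem_range.mp hk), mul_zero]
      · intro h; exact absurd (Finset.mem_range.mpr hmpos) h
    rw [h1]; ring
  obtain ⟨C1, hC1, δ1, hδ1, hR1⟩ := aux_remainder hp (m+1)
  have hUHI : ∀ z : ℂ, 0 < z.im → ‖z‖ < min δ1 ε →
      -(C1 * ‖z‖^(m+1)) ≤ (p.coeff m * z^m).im := by
    intro z h1 h2
    have hfz : 0 < (f z).im := hmap z (hmem z (h2.trans_le (min_le_right _ _)) h1)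
    have hb := hR1 z (h2.trans_le (min_le_left _ _))
    rw [hpsum] at hb
    have him : |(f z - (f 0 + p.coeff m * z^m)).im| ≤ C1 * ‖z‖^(m+1) := by
      refine le_trans (Complex.abs_im_le_norm _) ?_
      exact hb
    rw [Complex.sub_im, Complex.add_im, hre, zero_add] at him
    rcases abs_le.mp him with ⟨_, hR⟩
    linarith
  have hdir : ∀ ω : ℂ, ‖ω‖ = 1 → 0 < ω.im → 0 ≤ (p.coeff m * ω^m).im := by
    intro ω h1 h2
    apply aux_nonneg hC1 (lt_min hδ1 εpos)
    intro r hr hrδ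
    have hnorm : ‖(r:ℂ) * ω‖ = r := by
      rw [norm_mul, h1, mul_one, Complex.norm_real, Real.norm_eq_abs, abs_of_pos hr]
    have hz1 : 0 < ((r:ℂ) * ω).im := by
      rw [aux_ofReal_mul_im]; positivity
    have h3 := hUHI _ hz1 (by rw [hnorm]; exact hrδ)
    rw [hnorm] at h3
    have h4 : (p.coeff m * ((r:ℂ)*ω)^m).im = (p.coeff m * ω^m).im * r^m := by
      rw [mul_pow, ← Complex.ofReal_pow,
        show p.coeff m * ((r^m : ℝ) * ω^m) = ((r^m : ℝ):ℂ) * (p.coeff m * ω^m) by ring,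
        aux_ofReal_mul_im, mul_comm]
    rw [h4] at h3
    have h5 : (-(C1*r)) * r^m ≤ (p.coeff m * ω^m).im * r^m := by
      calc (-(C1*r))*r^m = -(C1 * r^(m+1)) := by ring
        _ ≤ (p.coeff m * ω^m).im * r^m := h3
    exact le_of_mul_le_mul_right h5 (pow_pos hr m)
  have hang : ∀ φ : ℝ, 0 < φ → φ < m * Real.pi →
      0 ≤ (p.coeff m * Complex.exp ((φ:ℝ) * Complex.I)).im := by
    intro φ h1 h2
    have hmr : (0:ℝ) < m := by exact_mod_cast hmpos
    have hθ1 : 0 < φ / m := div_pos h1 hmr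
    have hθ2 : φ / m < Real.pi := by rw [div_lt_iff₀ hmr]; linarith [h2]
    have hω := hdir (Complex.exp (((φ/m : ℝ)) * Complex.I))
      (by rw [Complex.norm_exp_ofReal_mul_I])
      (by rw [Complex.exp_ofReal_mul_I_im]; exact Real.sin_pos_of_pos_of_lt_pi hθ1 hθ2)
    have hpow : Complex.exp (((φ/m : ℝ)) * Complex.I)^m = Complex.exp ((φ:ℝ) * Complex.I) := by
      rw [← Complex.exp_nat_mul]
      congr 1
      push_cast
      have hmc : (m:ℂ) ≠ 0 := by exact_mod_cast hmpos.ne'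
      field_simp
    rwa [hpow] at hω
  have hGval : ∀ φ : ℝ, (p.coeff m * Complex.exp ((φ:ℝ) * Complex.I)).im
      = (p.coeff m).re * Real.sin φ + (p.coeff m).im * Real.cos φ := by
    intro φ
    rw [Complex.mul_im, Complex.exp_ofReal_mul_I_im, Complex.exp_ofReal_mul_I_re]
  have hπ := Real.pi_pos
  have hm1 : m = 1 := by
    by_contra hne
    have hm2 : 2 ≤ m := by omega
    have h2π : (2:ℝ) * Real.pi ≤ m * Real.pi := by
      have h2m : (2:ℝ) ≤ m := by exact_mod_cast hm2
      nlinarith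
    have e1 := hang (Real.pi/2) (by linarith) (by linarith)
    have e2 := hang (Real.pi/2 + Real.pi) (by linarith) (by linarith)
    have e3 := hang (Real.pi/4) (by linarith) (by linarith)
    have e4 := hang (Real.pi/4 + Real.pi) (by linarith) (by linarith)
    rw [hGval, Real.sin_pi_div_two, Real.cos_pi_div_two] at e1
    rw [hGval, Real.sin_add_pi, Real.cos_add_pi, Real.sin_pi_div_two,
      Real.cos_pi_div_two] at e2
    rw [hGval, Real.sin_pi_div_four, Real.cos_pi_div_four] at e3
    rw [hGval, Real.sin_add_pi, Real.cos_add_pi, Real.sin_pi_div_four,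
      Real.cos_pi_div_four] at e4
    have hre0 : (p.coeff m).re = 0 := by linarith
    have hs : 0 < Real.sqrt 2 / 2 := by positivity
    have him0 : (p.coeff m).im = 0 := by nlinarith
    exact hmne (Complex.ext hre0 him0)
  have ha1ne : p.coeff 1 ≠ 0 := hm1 ▸ hmne
  have ha1re : 0 < (p.coeff 1).re := by
    have e1 := hang (Real.pi/2) (by linarith) (by rw [hm1]; push_cast; linarith)
    rw [hGval, Real.sin_pi_div_two, Real.cos_pi_div_two, hm1] at e1
    have h0 : 0 ≤ (p.coeff 1).re := by linarith
    rcases h0.lt_or_eq with h | h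
    · exact h
    · exact absurd (Complex.ext h.symm ha1im) ha1ne
  have hderiv : deriv f 0 = p.coeff 1 := by
    rw [← hcoeff 1]
    unfold taylorCoeff
    rw [iteratedDeriv_one]
    simp
  -- Step D: contact
  set b := (p.coeff 1).re with hbdef
  have hb : 0 < b := ha1re
  have ha1eq : p.coeff 1 = (b:ℂ) := Complex.ext (by simp [hbdef]) (by simp [ha1im])
  obtain ⟨C3, hC3, δ3, hδ3, hR3⟩ := aux_remainder hp 2
  have hpsum2 : ∀ z : ℂ, ∑ k ∈ Finset.range 2, z^k * p.coeff k = f 0 + p.coeff 1 * z := by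
    intro z
    rw [Finset.sum_range_succ, Finset.sum_range_one, ha0, pow_zero, one_mul, pow_one]
    ring
  set δ := min (min δ2 δ3) (min (v/(2*C2)) (b/(2*C3))) with hδdef
  have hδpos : 0 < δ := lt_min (lt_min hδ2 hδ3)
    (lt_min (div_pos hvpos (by linarith)) (div_pos hb (by linarith)))
  have hbounds : ∀ x : ℝ, 0 < |x| → |x| < δ →
      ((v/2) * |x|^n ≤ (f (x:ℂ)).im ∧ (f (x:ℂ)).im ≤ (3*v/2) * |x|^n) ∧
      ((b/2) * |x| ≤ ‖f 0 - f (x:ℂ)‖ ∧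
        ‖f 0 - f (x:ℂ)‖ ≤ (3*b/2) * |x|) := by
    intro x h0 hxδ
    have hxδ2 : |x| < δ2 := hxδ.trans_le ((min_le_left _ _).trans (min_le_left _ _))
    have hxδ3 : |x| < δ3 := hxδ.trans_le ((min_le_left _ _).trans (min_le_right _ _))
    have hxv : C2 * |x| ≤ v/2 := by
      have h1 := hxδ.trans_le ((min_le_right _ _).trans (min_le_left _ _))
      rw [lt_div_iff₀ (by linarith)] at h1
      linarith
    have hxb : C3 * |x| ≤ b/2 := by
      have h1 := hxδ.trans_le ((min_le_right _ _).trans (min_le_right _ _))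
      rw [lt_div_iff₀ (by linarith)] at h1
      linarith
    have hxn : x^n = |x|^n := (heven.pow_abs x).symm
    have him := himx x hxδ2
    rw [hxn] at him
    have hpow : C2 * |x|^(n+1) ≤ (v/2) * |x|^n := by
      rw [pow_succ]
      calc C2 * (|x|^n * |x|) = (C2 * |x|) * |x|^n := by ring
        _ ≤ (v/2) * |x|^n := mul_le_mul_of_nonneg_right hxv (by positivity)
    rcases abs_le.mp him with ⟨hL, hR⟩
    constructor
    · constructor
      · linarith
      · linarith
    · have hb3 := hR3 (x:ℂ) (by simpa using hxδ3)
      rw [hpsum2] at hb3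
      have hb3' : ‖f (x:ℂ) - (f 0 + p.coeff 1 * (x:ℂ))‖ ≤ C3 * |x|^2 := by simpa using hb3
      have ha1x : ‖p.coeff 1 * (x:ℂ)‖ = b * |x| := by
        rw [norm_mul, ha1eq, Complex.norm_real, Real.norm_eq_abs, abs_of_pos hb,
          Complex.norm_real, Real.norm_eq_abs]
      have hC3b : C3 * |x|^2 ≤ (b/2) * |x| := by
        rw [pow_two]
        calc C3 * (|x| * |x|) = (C3 * |x|) * |x| := by ring
          _ ≤ (b/2) * |x| := mul_le_mul_of_nonneg_right hxb (abs_nonneg x)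
      have hA : ‖f 0 - f (x:ℂ)‖ = ‖f (x:ℂ) - f 0‖ := by
        rw [norm_sub_rev]
      have htri1 : ‖f (x:ℂ) - f 0‖ ≤ b*|x| + C3*|x|^2 := by
        calc ‖f (x:ℂ) - f 0‖
            = ‖p.coeff 1 * (x:ℂ) + (f (x:ℂ) - (f 0 + p.coeff 1 * (x:ℂ)))‖ := by ring_nf
          _ ≤ ‖p.coeff 1 * (x:ℂ)‖ + ‖f (x:ℂ) - (f 0 + p.coeff 1 * (x:ℂ))‖ := norm_add_le _ _
          _ ≤ b*|x| + C3*|x|^2 := by rw [ha1x]; linarith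
      have htri2 : b*|x| - C3*|x|^2 ≤ ‖f (x:ℂ) - f 0‖ := by
        have h5 : ‖p.coeff 1 * (x:ℂ)‖ - ‖f (x:ℂ) - f 0‖
            ≤ ‖p.coeff 1 * (x:ℂ) - (f (x:ℂ) - f 0)‖ := norm_sub_norm_le _ _
        have h6 : ‖p.coeff 1 * (x:ℂ) - (f (x:ℂ) - f 0)‖
            = ‖f (x:ℂ) - (f 0 + p.coeff 1 * (x:ℂ))‖ := by
          rw [← norm_neg]; congr 1; ring
        rw [h6, ha1x] at h5
        linarith
      rw [hA]
      constructor
      · linarith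
      · linarith
  refine ⟨⟨by rw [hderiv]; exact ha1im, by rw [hderiv]; exact hb⟩, heven,
    by rw [hcoeff]; exact hvpos, hre, (v/2)/((3*b/2)^n), (3*v/2)/((b/2)^n), δ,
    div_pos (by linarith) (pow_pos (by linarith) n), ?_, hδpos, ?_⟩
  · exact div_le_div₀ (by linarith) (by linarith) (pow_pos (by linarith) n)
      (pow_le_pow_left₀ (by linarith) (by linarith) n)
  · intro x hx1 hx2
    obtain ⟨⟨hi1, hi2⟩, hd1, hd2⟩ := hbounds x hx1 hx2
    have hplus : (0:ℝ) < |x| := hx1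
    set D := ‖f 0 - f (x:ℂ)‖ with hD
    have hDpos : 0 < D := lt_of_lt_of_le (mul_pos (by linarith) hplus) hd1
    have himpos : 0 ≤ (f (x:ℂ)).im :=
      le_trans (mul_nonneg (by linarith) (pow_nonneg (abs_nonneg x) n)) hi1
    rw [Real.rpow_natCast]
    constructor
    · have e : ((v/2) * |x|^n) / (((3*b/2)*|x|)^n) = (v/2)/((3*b/2)^n) := by
        rw [mul_pow]; exact mul_div_mul_right _ _ (pow_ne_zero n (ne_of_gt hplus))
      rw [← e]
      exact div_le_div₀ himpos hi1 (pow_pos hDpos n)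
        (pow_le_pow_left₀ hDpos.le hd2 n)
    · have e : ((3*v/2) * |x|^n) / (((b/2)*|x|)^n) = (3*v/2)/((b/2)^n) := by
        rw [mul_pow]; exact mul_div_mul_right _ _ (pow_ne_zero n (ne_of_gt hplus))
      rw [← e]
      have h1 : (0:ℝ) < (b/2)*|x| := mul_pos (by linarith) hplus
      have h2 : ((b/2)*|x|)^n ≤ D^n := pow_le_pow_left₀ h1.le hd1 n
      have h3 : (0:ℝ) ≤ (3*v/2)*|x|^n :=
        mul_nonneg (by linarith) (pow_nonneg (abs_nonneg x) n)
      exact div_le_div₀ h3 hi2 (pow_pos h1 n) h2
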